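/- The operad FH of forests of rooted hypertrees is generated by its arity-2 component, i.e. by the elements x₂ (2-vertex rooted tree) and c₂ (two-vertex forest). -/

import Mathlib

noncomputable section

/-- A forest of rooted hypertrees on a vertex/label set `V`: parent function and
sibling relation recording which co-children share a common hyperedge. -/
structure FHs (V : Type) where
  parent : V → Option V
  sib : V → V → Bool

/-- `S` is a genuine forest of rooted hypertrees: the parent function is acyclic, and the
sibling (same hyperedge) relation is symmetric, irreflexive, only relates co-children of a
common parent, and its classes are genuine (transitivity). -/
def IsForestFH {V : Type} (S : FHs V) : Prop :=
  (∃ h : V → ℕ, ∀ v p, S.parent v = some p → h p < h v) ∧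
  (∀ v w, S.sib v w → S.sib w v) ∧
  (∀ v, ¬ S.sib v v) ∧
  (∀ v w, S.sib v w → S.parent v = S.parent w ∧ S.parent v ≠ none) ∧
  (∀ u v w, S.sib u v → S.sib v w → u = w ∨ S.sib u w)

/-- Relabeling along a bijection of label sets. -/
def mapFHs {V W : Type} (e : V ≃ W) (S : FHs V) : FHs W where
  parent w := (S.parent (e.symm w)).map e
  sib w w' := S.sib (e.symm w) (e.symm w')

/-- One grafting term of the insertion `S ∘ᵢ T`. -/
def graftFHs {α β : Type} [DecidableEq α] [DecidableEq β] (S : FHs α) (i : α) (T : FHs β)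
    (f : {a : α // S.parent a = some i} → β) : FHs ({a : α // a ≠ i} ⊕ β) where
  parent v :=
    match v with
    | Sum.inl a =>
        match h : S.parent a.1 with
        | none => none
        | some p =>
            if hp : p = i then some (Sum.inr (f ⟨a.1, by rw [h, hp]⟩))
            else some (Sum.inl ⟨p, hp⟩)
    | Sum.inr b =>
        match T.parent b with
        | some q => some (Sum.inr q)
        | none =>
            match S.parent i with
            | none => none
            | some p => if hp : p = i then none else some (Sum.inl ⟨p, hp⟩)
  sib v w :=
    match v, w with
    | Sum.inl a, Sum.inl a' => S.sib a.1 a'.1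
    | Sum.inr b, Sum.inr b' =>
        T.sib b b' ||
          (decide (T.parent b = none) && decide (T.parent b' = none) &&
            decide (b ≠ b') && decide (S.parent i ≠ none))
    | _, _ => false

/-- The insertion `S ∘ᵢ T` in the operad of forests of rooted hypertrees. -/
def insFHs {α β : Type} [Fintype α] [DecidableEq α] [Fintype β] [DecidableEq β]
    (S : FHs α) (i : α) (T : FHs β) : (FHs ({a : α // a ≠ i} ⊕ β)) →₀ ℚ :=
  ∑ f : {f : {a : α // S.parent a = some i} → β //
      ∀ a b : {a : α // S.parent a = some i}, S.sib a.1 b.1 → f a = f b},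
    Finsupp.single (graftFHs S i T f.1) 1

/-- Bilinear extension of the insertion to formal sums. -/
def insFHsLin {α β : Type} [Fintype α] [DecidableEq α] [Fintype β] [DecidableEq β]
    (s : FHs α →₀ ℚ) (i : α) (t : FHs β →₀ ℚ) : (FHs ({a : α // a ≠ i} ⊕ β)) →₀ ℚ :=
  s.sum fun S cs => t.sum fun T ct => (cs * ct) • insFHs S i T

/-- The generator `x₂`: the rooted tree `1—2` rooted at `1`. -/
def xFH : FHs (Fin 2) := ⟨fun v => if v = 0 then none else some 0, fun _ _ => false⟩

/-- The generator `c₂`: the forest of the two isolated vertices. -/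
def cFH : FHs (Fin 2) := ⟨fun _ => none, fun _ _ => false⟩

/-- The suboperad of `FH` generated by the arity-2 component (by `x₂` and `c₂`):
the smallest collection of linear subspaces of the spaces of formal sums, over all label
sets, containing the identity, `x₂` and `c₂`, closed under relabeling and under all
insertions. -/
inductive GenFH : ∀ (V : Type) [Fintype V] [DecidableEq V], (FHs V →₀ ℚ) → Prop
  | unit : GenFH (Fin 1) (Finsupp.single ⟨fun _ => none, fun _ _ => false⟩ 1)
  | x2 : GenFH (Fin 2) (Finsupp.single xFH 1)
  | c2 : GenFH (Fin 2) (Finsupp.single cFH 1)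
  | relabel {V W : Type} [Fintype V] [DecidableEq V] [Fintype W] [DecidableEq W]
      (e : V ≃ W) {s : FHs V →₀ ℚ} :
      GenFH V s → GenFH W (Finsupp.mapDomain (mapFHs e) s)
  | comp {V W : Type} [Fintype V] [DecidableEq V] [Fintype W] [DecidableEq W]
      (i : V) {s : FHs V →₀ ℚ} {t : FHs W →₀ ℚ} :
      GenFH V s → GenFH W t → GenFH _ (insFHsLin s i t)
  | add {V : Type} [Fintype V] [DecidableEq V] {s t : FHs V →₀ ℚ} :
      GenFH V s → GenFH V t → GenFH V (s + t)
  | smul {V : Type} [Fintype V] [DecidableEq V] (q : ℚ) {s : FHs V →₀ ℚ} :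
      GenFH V s → GenFH V (q • s)

section Prelim

variable {V W : Type}

theorem FHs.ext' {S T : FHs V} (hp : ∀ v, S.parent v = T.parent v)
    (hs : ∀ v w, S.sib v w = T.sib v w) : S = T := by
  cases S; cases T
  simp only [FHs.mk.injEq]
  exact ⟨funext hp, funext fun v => funext fun w => hs v w⟩

theorem parent_ne_self {S : FHs V} (hS : IsForestFH S) (v : V) : S.parent v ≠ some v := by
  obtain ⟨⟨h, hh⟩, _⟩ := hS
  intro hv
  exact absurd (hh v v hv) (lt_irrefl _)

/-- ancestor relation -/
def AncFH (S : FHs V) : V → V → Prop := Relation.TransGen (fun x y => S.parent x = some y)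

theorem anc_lt {S : FHs V} {h : V → ℕ} (hh : ∀ v p, S.parent v = some p → h p < h v)
    {x y : V} (hxy : AncFH S x y) : h y < h x := by
  induction hxy with
  | single hs => exact hh _ _ hs
  | tail _ hs ih => exact (hh _ _ hs).trans ih

theorem anc_irrefl {S : FHs V} (hS : IsForestFH S) (x : V) : ¬ AncFH S x x := by
  obtain ⟨⟨h, hh⟩, _⟩ := hS
  intro hx
  exact absurd (anc_lt hh hx) (lt_irrefl _)

/-- total ancestor count -/
noncomputable def PhiFH (S : FHs V) [Fintype V] : ℕ := ∑ x : V, {y | AncFH S x y}.ncard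

theorem phi_lt {S : FHs V} [Fintype V] [Nonempty V] (hS : IsForestFH S) :
    PhiFH S < Fintype.card V * Fintype.card V := by
  have hb : ∀ x : V, {y | AncFH S x y}.ncard ≤ Fintype.card V - 1 := by
    intro x
    have hsub : {y | AncFH S x y} ⊆ (Set.univ \ {x}) := by
      intro y hy
      refine ⟨trivial, ?_⟩
      simp only [Set.mem_singleton_iff]
      rintro rfl
      exact anc_irrefl hS _ hy
    have := Set.ncard_le_ncard hsub (Set.toFinite _)
    rwa [Set.ncard_diff_singleton_of_mem (Set.mem_univ x), Set.ncard_univ,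
      Nat.card_eq_fintype_card] at this
  have h1 : PhiFH S ≤ ∑ _x : V, (Fintype.card V - 1) := Finset.sum_le_sum fun x _ => hb x
  rw [Finset.sum_const, Finset.card_univ, smul_eq_mul] at h1
  have : 0 < Fintype.card V := Fintype.card_pos
  calc PhiFH S ≤ Fintype.card V * (Fintype.card V - 1) := h1
    _ < Fintype.card V * Fintype.card V :=
        mul_lt_mul_of_pos_left (by omega) this

theorem anc_map {e : V ≃ W} {G : FHs V} {x y : W} :
    AncFH (mapFHs e G) x y ↔ AncFH G (e.symm x) (e.symm y) := by
  have hstep : ∀ a b : W, (mapFHs e G).parent a = some b ↔ G.parent (e.symm a) = some (e.symm b) := by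
    intro a b
    simp only [mapFHs, Option.map_eq_some_iff]
    constructor
    · rintro ⟨z, hz, rfl⟩; simpa using hz
    · intro h; exact ⟨e.symm b, h, by simp⟩
  constructor
  · intro h
    induction h with
    | single hs => exact Relation.TransGen.single ((hstep _ _).mp hs)
    | tail _ hs ih => exact Relation.TransGen.tail ih ((hstep _ _).mp hs)
  · intro h
    have hst : ∀ a b : V, G.parent a = some b → (mapFHs e G).parent (e a) = some (e b) := by
      intro a b hab
      rw [hstep]; simpa using hab
    have key : ∀ a b : V, AncFH G a b → AncFH (mapFHs e G) (e a) (e b) := by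
      intro a b hab
      induction hab with
      | single hs => exact Relation.TransGen.single (hst _ _ hs)
      | tail _ hs ih => exact Relation.TransGen.tail ih (hst _ _ hs)
    simpa using key _ _ h

theorem phi_map [Fintype V] [Fintype W] (e : V ≃ W) (G : FHs V) :
    PhiFH (mapFHs e G) = PhiFH G := by
  unfold PhiFH
  rw [← e.sum_comp]
  apply Finset.sum_congr rfl
  intro x _
  have : {y | AncFH (mapFHs e G) (e x) y} = e '' {y | AncFH G x y} := by
    ext y
    simp only [Set.mem_setOf_eq, Set.mem_image, anc_map, Equiv.symm_apply_apply]
    constructor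
    · intro h; exact ⟨e.symm y, h, by simp⟩
    · rintro ⟨z, hz, rfl⟩; simpa using hz
  rw [this, Set.ncard_image_of_injective _ e.injective]

end Prelim
section Helpers

variable {V W : Type}

theorem genFH_zero_of [Fintype V] [DecidableEq V] {s : FHs V →₀ ℚ} (hs : GenFH V s) :
    GenFH V 0 := by
  have h := hs.add (GenFH.smul (-1) hs)
  simpa using h

theorem genFH_sub [Fintype V] [DecidableEq V] {s t : FHs V →₀ ℚ}
    (hs : GenFH V s) (ht : GenFH V t) : GenFH V (s - t) := by
  have h := hs.add (GenFH.smul (-1) ht)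
  simpa [sub_eq_add_neg] using h

theorem genFH_sum [Fintype V] [DecidableEq V] {ι : Type*} (A : Finset ι) (F : ι → FHs V →₀ ℚ)
    (h0 : GenFH V 0) (h : ∀ g ∈ A, GenFH V (F g)) : GenFH V (∑ g ∈ A, F g) := by
  classical
  induction A using Finset.induction_on with
  | empty => simpa using h0
  | insert _ _ hni ih =>
    rw [Finset.sum_insert hni]
    exact GenFH.add (h _ (Finset.mem_insert_self _ _))
      (ih fun g hg => h g (Finset.mem_insert_of_mem hg))

theorem insLin_ss {α β : Type} [Fintype α] [DecidableEq α] [Fintype β] [DecidableEq β]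
    (S : FHs α) (i : α) (T : FHs β) :
    insFHsLin (Finsupp.single S 1) i (Finsupp.single T 1) = insFHs S i T := by
  unfold insFHsLin
  rw [Finsupp.sum_single_index, Finsupp.sum_single_index]
  · simp
  · simp
  · rw [Finsupp.sum_single_index] <;> simp

theorem insFHs_eq_single {α β : Type} [Fintype α] [DecidableEq α] [Fintype β] [DecidableEq β]
    (S : FHs α) (i : α) (T : FHs β) (h : ∀ a, S.parent a ≠ some i)
    (f : {a : α // S.parent a = some i} → β) :
    insFHs S i T = Finsupp.single (graftFHs S i T f) 1 := by
  unfold insFHs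
  have hgr : ∀ g : {f : {a : α // S.parent a = some i} → β //
      ∀ a b : {a : α // S.parent a = some i}, S.sib a.1 b.1 → f a = f b},
      graftFHs S i T g.1 = graftFHs S i T f := by
    intro g
    exact congrArg _ (funext fun a => absurd a.2 (h a.1))
  have hcard : Fintype.card {f : {a : α // S.parent a = some i} → β //
      ∀ a b : {a : α // S.parent a = some i}, S.sib a.1 b.1 → f a = f b} = 1 := by
    rw [Fintype.card_eq_one_iff]
    refine ⟨⟨f, fun a b _ => absurd a.2 (h a.1)⟩, fun g => ?_⟩
    exact Subtype.ext (funext fun a => absurd a.2 (h a.1))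
  calc (∑ g : {f : {a : α // S.parent a = some i} → β //
      ∀ a b : {a : α // S.parent a = some i}, S.sib a.1 b.1 → f a = f b},
      Finsupp.single (graftFHs S i T g.1) (1 : ℚ))
      = ∑ _g : {f : {a : α // S.parent a = some i} → β //
      ∀ a b : {a : α // S.parent a = some i}, S.sib a.1 b.1 → f a = f b},
      Finsupp.single (graftFHs S i T f) (1 : ℚ) :=
        Finset.sum_congr rfl fun g _ => by rw [hgr g]
    _ = Finsupp.single (graftFHs S i T f) 1 := by
        rw [Finset.sum_const, Finset.card_univ, hcard, one_smul]

end Helpers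
section Res

variable {V W : Type}

/-- Restriction of a forest structure to a subset (with sib filtered to pairs whose
common parent stays, so that the forest axioms persist). -/
def resFHs (S : FHs V) (P : V → Prop) [DecidablePred P] : FHs {u // P u} where
  parent u := (S.parent u.1).bind fun q => if h : P q then some ⟨q, h⟩ else none
  sib u w := S.sib u.1 w.1 &&
    (match S.parent u.1 with
     | none => false
     | some q => decide (P q))

theorem resFHs_parent_none {S : FHs V} {P : V → Prop} [DecidablePred P] {u : {u // P u}}
    (h : S.parent u.1 = none) : (resFHs S P).parent u = none := by
  simp [resFHs, h]

theorem resFHs_parent_some {S : FHs V} {P : V → Prop} [DecidablePred P] {u : {u // P u}}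
    {q : V} (h : S.parent u.1 = some q) (hq : P q) :
    (resFHs S P).parent u = some ⟨q, hq⟩ := by
  simp [resFHs, h, hq]

theorem resFHs_parent_out {S : FHs V} {P : V → Prop} [DecidablePred P] {u : {u // P u}}
    {q : V} (h : S.parent u.1 = some q) (hq : ¬ P q) :
    (resFHs S P).parent u = none := by
  simp [resFHs, h, hq]

theorem resFHs_sib_true {S : FHs V} {P : V → Prop} [DecidablePred P] {u w : {u // P u}}
    {q : V} (hs : S.sib u.1 w.1 = true) (h : S.parent u.1 = some q) (hq : P q) :
    (resFHs S P).sib u w = true := by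
  simp [resFHs, hs, h, hq]

theorem resFHs_sib_of_false {S : FHs V} {P : V → Prop} [DecidablePred P] {u w : {u // P u}}
    (hs : S.sib u.1 w.1 = false) : (resFHs S P).sib u w = false := by
  simp [resFHs, hs]

theorem resFHs_sib_elim {S : FHs V} {P : V → Prop} [DecidablePred P] {u w : {u // P u}}
    (h : (resFHs S P).sib u w = true) :
    S.sib u.1 w.1 = true ∧ ∃ q, S.parent u.1 = some q ∧ P q := by
  simp only [resFHs, Bool.and_eq_true] at h
  refine ⟨h.1, ?_⟩
  rcases hpar : S.parent u.1 with _ | q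
  · rw [hpar] at h; simp at h
  · rw [hpar] at h
    simp only [decide_eq_true_eq] at h
    exact ⟨q, rfl, h.2⟩

theorem resFHs_forest {S : FHs V} (hS : IsForestFH S) (P : V → Prop) [DecidablePred P] :
    IsForestFH (resFHs S P) := by
  obtain ⟨⟨h, hh⟩, hsymm, hirr, hpar, htr⟩ := hS
  refine ⟨⟨fun u => h u.1, ?_⟩, ?_, ?_, ?_, ?_⟩
  · intro v p hvp
    apply hh
    simp only [resFHs, Option.bind_eq_some_iff] at hvp
    obtain ⟨q, hq1, hq2⟩ := hvp
    split at hq2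
    · cases hq2; exact hq1
    · cases hq2
  · intro v w hvw
    obtain ⟨hs, q, hq, hPq⟩ := resFHs_sib_elim hvw
    have hpw : S.parent w.1 = some q := ((hpar _ _ hs).1 ▸ hq : _)
    exact resFHs_sib_true (hsymm _ _ hs) hpw hPq
  · intro v hv
    obtain ⟨hs, _⟩ := resFHs_sib_elim hv
    exact hirr _ hs
  · intro v w hvw
    obtain ⟨hs, q, hq, hPq⟩ := resFHs_sib_elim hvw
    have hpw : S.parent w.1 = some q := ((hpar _ _ hs).1 ▸ hq : _)
    constructor
    · rw [resFHs_parent_some hq hPq, resFHs_parent_some hpw hPq]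
    · rw [resFHs_parent_some hq hPq]; simp
  · intro u v w huv hvw
    obtain ⟨hs1, q, hq, hPq⟩ := resFHs_sib_elim huv
    obtain ⟨hs2, _, _, _⟩ := resFHs_sib_elim hvw
    rcases htr _ _ _ hs1 hs2 with heq | hs3
    · exact Or.inl (Subtype.ext heq)
    · exact Or.inr (resFHs_sib_true hs3 hq hPq)

/-- Criterion for `mapFHs e G = S` in terms of forward values of `e`. -/
theorem mapFHs_eq_of {A : Type} (e : A ≃ V) (G : FHs A) (S : FHs V)
    (hp : ∀ x, (G.parent x).map e = S.parent (e x))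
    (hs : ∀ x y, G.sib x y = S.sib (e x) (e y)) : mapFHs e G = S := by
  apply FHs.ext'
  · intro v
    have := hp (e.symm v)
    simpa [mapFHs] using this
  · intro v w
    have := hs (e.symm v) (e.symm w)
    simpa [mapFHs] using this

end Res
section GraftEval

variable {α β : Type} [DecidableEq α] [DecidableEq β] {S : FHs α} {i : α} {T : FHs β}
  {f : {a : α // S.parent a = some i} → β}

theorem graft_parent_inl_none {a : {a : α // a ≠ i}} (h : S.parent a.1 = none) :
    (graftFHs S i T f).parent (Sum.inl a) = none := by
  simp only [graftFHs]
  split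
  · rfl
  · rename_i p hp; rw [h] at hp; cases hp

theorem graft_parent_inl_eq {a : {a : α // a ≠ i}} (h : S.parent a.1 = some i) :
    (graftFHs S i T f).parent (Sum.inl a) = some (Sum.inr (f ⟨a.1, h⟩)) := by
  simp only [graftFHs]
  split
  · rename_i hn; rw [h] at hn; cases hn
  · rename_i p hp
    rw [h] at hp
    cases hp
    rw [dif_pos rfl]

theorem graft_parent_inl_ne {a : {a : α // a ≠ i}} {p : α} (h : S.parent a.1 = some p)
    (hp : p ≠ i) : (graftFHs S i T f).parent (Sum.inl a) = some (Sum.inl ⟨p, hp⟩) := by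
  simp only [graftFHs]
  split
  · rename_i hn; rw [h] at hn; cases hn
  · rename_i p' hp'
    rw [h] at hp'
    cases hp'
    rw [dif_neg hp]

theorem graft_parent_inr_some {b : β} {q : β} (h : T.parent b = some q) :
    (graftFHs S i T f).parent (Sum.inr b) = some (Sum.inr q) := by
  simp only [graftFHs]
  split
  · rename_i hq; rw [h] at hq; cases hq; rfl
  · rename_i hn; rw [h] at hn; cases hn

theorem graft_parent_inr_none_none {b : β} (hb : T.parent b = none) (hi : S.parent i = none) :
    (graftFHs S i T f).parent (Sum.inr b) = none := by
  simp only [graftFHs]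
  split
  · rename_i hq; rw [hb] at hq; cases hq
  · split
    · rfl
    · rename_i p hp; rw [hi] at hp; cases hp

theorem graft_parent_inr_none_some {b : β} {p : α} (hb : T.parent b = none)
    (hi : S.parent i = some p) (hp : p ≠ i) :
    (graftFHs S i T f).parent (Sum.inr b) = some (Sum.inl ⟨p, hp⟩) := by
  simp only [graftFHs]
  split
  · rename_i hq; rw [hb] at hq; cases hq
  · split
    · rename_i hn; rw [hi] at hn; cases hn
    · rename_i p' hp'
      rw [hi] at hp'
      cases hp'
      rw [dif_neg hp]

theorem graft_sib_inl_inl {a a' : {a : α // a ≠ i}} :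
    (graftFHs S i T f).sib (Sum.inl a) (Sum.inl a') = S.sib a.1 a'.1 := rfl

theorem graft_sib_inr_inr {b b' : β} :
    (graftFHs S i T f).sib (Sum.inr b) (Sum.inr b') =
      (T.sib b b' ||
          (decide (T.parent b = none) && decide (T.parent b' = none) &&
            decide (b ≠ b') && decide (S.parent i ≠ none))) := rfl

theorem graft_sib_inl_inr {a : {a : α // a ≠ i}} {b : β} :
    (graftFHs S i T f).sib (Sum.inl a) (Sum.inr b) = false := rfl

theorem graft_sib_inr_inl {a : {a : α // a ≠ i}} {b : β} :
    (graftFHs S i T f).sib (Sum.inr b) (Sum.inl a) = false := rfl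

end GraftEval
section CaseB

variable {V : Type} [Fintype V] [DecidableEq V]

theorem caseB (S : FHs V) (hS : IsForestFH S) (v p : V)
    (hpv : S.parent v = some p) (hpne : p ≠ v)
    (hleaf : ∀ u, S.parent u ≠ some v)
    (hnosib : ∀ a b, S.sib a b = false)
    (hgen : GenFH {u : V // u ≠ v} (Finsupp.single (resFHs S (fun u => u ≠ v)) 1))
    (hrec : ∀ G : FHs ({a : {u : V // u ≠ v} // a ≠ (⟨p, hpne⟩ : {u : V // u ≠ v})} ⊕ Fin 2),
      IsForestFH G → PhiFH S < PhiFH G → GenFH _ (Finsupp.single G 1)) :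
    GenFH V (Finsupp.single S 1) := by
  classical
  set V' := {u : V // u ≠ v} with hV'
  set S' : FHs V' := resFHs S (fun u => u ≠ v) with hS'def
  have hS'forest : IsForestFH S' := resFHs_forest hS _
  set pV : V' := ⟨p, hpne⟩ with hpV
  -- the index type of grafting functions
  set Sub := {f : {a : V' // S'.parent a = some pV} → Fin 2 //
      ∀ a b : {a : V' // S'.parent a = some pV}, S'.sib a.1 b.1 → f a = f b} with hSub
  set F₀ : Sub := ⟨fun _ => 0, fun _ _ _ => rfl⟩ with hF₀
  set G : Sub → FHs ({a : V' // a ≠ pV} ⊕ Fin 2) := fun g => graftFHs S' pV xFH g.1 with hGdef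
  -- sibs vanish in every graft
  have hS'nosib : ∀ a b : V', S'.sib a b = false := by
    intro a b
    rw [hS'def]
    exact resFHs_sib_of_false (hnosib _ _)
  have hGsib : ∀ g : Sub, ∀ x y, (G g).sib x y = false := by
    intro g x y
    rcases x with a | b <;> rcases y with a' | b'
    · rw [hGdef]; rw [graft_sib_inl_inl]; exact hS'nosib _ _
    · rw [hGdef]; rw [graft_sib_inl_inr]
    · rw [hGdef]; rw [graft_sib_inr_inl]
    · rw [hGdef]; rw [graft_sib_inr_inr]
      fin_cases b <;> fin_cases b' <;> simp [xFH]
  -- parents of inr vertices do not depend on the grafting function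
  have hGinr : ∀ g : Sub, ∀ b : Fin 2, (G g).parent (Sum.inr b) = (G F₀).parent (Sum.inr b) := by
    intro g b
    simp only [hGdef]
    rcases hb : xFH.parent b with _ | q
    · rcases hp' : S'.parent pV with _ | p'
      · rw [graft_parent_inr_none_none hb hp', graft_parent_inr_none_none hb hp']
      · have hp'ne : p' ≠ pV := by
          intro h
          exact parent_ne_self hS'forest pV (h ▸ hp')
        rw [graft_parent_inr_none_some hb hp' hp'ne, graft_parent_inr_none_some hb hp' hp'ne]
    · rw [graft_parent_inr_some hb, graft_parent_inr_some hb]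
  -- every graft is a forest
  have hGforest : ∀ g : Sub, IsForestFH (G g) := by
    intro g
    obtain ⟨h', hh'⟩ := hS'forest.1
    refine ⟨⟨Sum.elim (fun a => 3 * h' a.1) (fun b => 3 * h' pV + 1 + b.1), ?_⟩, ?_, ?_, ?_, ?_⟩
    · rintro (a | b) q hq
      · rcases hpa : S'.parent a.1 with _ | q'
        · rw [hGdef] at hq; rw [graft_parent_inl_none hpa] at hq; cases hq
        · have hlt : h' q' < h' a.1 := hh' _ _ hpa
          by_cases hq' : q' = pV
          · subst hq'
            rw [hGdef] at hq; rw [graft_parent_inl_eq hpa] at hq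
            cases hq
            have : (g.1 ⟨a.1, hpa⟩ : Fin 2).1 ≤ 1 := Nat.lt_succ_iff.mp (g.1 ⟨a.1, hpa⟩).isLt
            simp only [Sum.elim_inl, Sum.elim_inr]
            omega
          · rw [hGdef] at hq; rw [graft_parent_inl_ne hpa hq'] at hq
            cases hq
            simp only [Sum.elim_inl]
            omega
      · rw [hGinr] at hq
        rcases hb : xFH.parent b with _ | q0
        · rcases hp' : S'.parent pV with _ | p'
          · rw [hGdef] at hq; rw [graft_parent_inr_none_none hb hp'] at hq; cases hq
          · have hp'ne : p' ≠ pV := by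
              intro h
              exact parent_ne_self hS'forest pV (h ▸ hp')
            rw [hGdef] at hq; rw [graft_parent_inr_none_some hb hp' hp'ne] at hq
            cases hq
            have := hh' _ _ hp'
            simp only [Sum.elim_inl, Sum.elim_inr]
            omega
        · rw [hGdef] at hq; rw [graft_parent_inr_some hb] at hq
          cases hq
          have hb0 : b ≠ 0 := by
            intro h
            rw [h] at hb
            simp [xFH] at hb
          have hx0 : xFH.parent b = Option.some 0 := by simp [xFH, hb0]
          rw [hx0] at hb
          have hq00 : q0 = 0 := (Option.some_inj.mp hb).symm
          subst hq00
          have hbv : (b : ℕ) ≠ 0 := fun h => hb0 (Fin.ext h)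
          have hbl : (b : ℕ) < 2 := b.isLt
          simp only [Sum.elim_inr, Fin.val_zero]
          omega
    · intro x y hxy; rw [hGsib] at hxy; cases hxy
    · intro x hx; rw [hGsib] at hx; cases hx
    · intro x y hxy; rw [hGsib] at hxy; cases hxy
    · intro x y z hxy; rw [hGsib] at hxy; cases hxy
  -- the relabeling equivalence
  set F : ({a : V' // a ≠ pV} ⊕ Fin 2) → V :=
    Sum.elim (fun a => a.1.1) (fun b => if b = 1 then v else p) with hF
  have hbij : Function.Bijective F := by
    constructor
    · rintro (a | b) (a' | b') h
      · exact congrArg _ (Subtype.ext (Subtype.ext h))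
      · exfalso
        simp only [hF, Sum.elim_inl, Sum.elim_inr] at h
        by_cases hb : b' = 1
        · rw [if_pos hb] at h; exact a.1.2 h
        · rw [if_neg hb] at h
          exact a.2 (Subtype.ext h)
      · exfalso
        simp only [hF, Sum.elim_inl, Sum.elim_inr] at h
        by_cases hb : b = 1
        · rw [if_pos hb] at h; exact a'.1.2 h.symm
        · rw [if_neg hb] at h
          exact a'.2 (Subtype.ext h.symm)
      · simp only [hF, Sum.elim_inr] at h
        by_cases hb : b = 1 <;> by_cases hb' : b' = 1
        · rw [hb, hb']
        · rw [if_pos hb, if_neg hb'] at h; exact absurd h.symm hpne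
        · rw [if_neg hb, if_pos hb'] at h; exact absurd h hpne
        · congr 1
          have h1 : (b : ℕ) < 2 := b.isLt
          have h2 : (b' : ℕ) < 2 := b'.isLt
          have h3 : (b : ℕ) ≠ 1 := fun hh => hb (Fin.ext hh)
          have h4 : (b' : ℕ) ≠ 1 := fun hh => hb' (Fin.ext hh)
          apply Fin.ext
          omega
    · intro u
      by_cases h1 : u = v
      · exact ⟨Sum.inr 1, by simp [hF, h1]⟩
      by_cases h2 : u = p
      · refine ⟨Sum.inr 0, ?_⟩
        simp only [hF, Sum.elim_inr]
        rw [if_neg (by decide)]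
        exact h2.symm
      · refine ⟨Sum.inl ⟨⟨u, h1⟩, fun hh => h2 (congrArg Subtype.val hh)⟩, rfl⟩
  set e := Equiv.ofBijective F hbij with he
  have hev : ∀ x, e x = F x := fun x => rfl
  have hmap : mapFHs e (G F₀) = S := by
    apply mapFHs_eq_of
    · rintro (a | b)
      · rcases hq : S.parent a.1.1 with _ | q
        · rw [hGdef]
          rw [graft_parent_inl_none (by rw [hS'def]; exact resFHs_parent_none hq)]
          simp [hev, hF, hq]
        · have hqv : q ≠ v := fun h => hleaf a.1.1 (h ▸ hq)
          have hres : S'.parent a.1 = some (⟨q, hqv⟩ : V') := by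
            rw [hS'def]; exact resFHs_parent_some hq hqv
          by_cases hqp : (⟨q, hqv⟩ : V') = pV
          · have hres' : S'.parent a.1 = some pV := by rw [hres, hqp]
            rw [hGdef]
            rw [graft_parent_inl_eq hres']
            have : q = p := congrArg Subtype.val hqp
            simp only [Option.map_some, hev, hF, Sum.elim_inl, Sum.elim_inr, hq, this]
            rw [if_neg (by simp [hF₀])]
          · rw [hGdef]
            rw [graft_parent_inl_ne hres hqp]
            simp [hev, hF, hq]
      · by_cases hb : b = 1
        · subst hb
          rw [hGdef]
          rw [graft_parent_inr_some (show xFH.parent 1 = Option.some 0 by decide)]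
          have e1 : e (Sum.inr 1) = v := by
            rw [hev]; simp [hF]
          have e0 : e (Sum.inr 0) = p := by
            rw [hev]; simp only [hF, Sum.elim_inr]; rw [if_neg (by decide)]
          rw [e1, hpv, Option.map_some, e0]
        · have hb0 : b = 0 := by
            apply Fin.ext
            have h1 : (b : ℕ) < 2 := b.isLt
            have h3 : (b : ℕ) ≠ 1 := fun hh => hb (Fin.ext hh)
            omega
          subst hb0
          have hxb : xFH.parent 0 = none := by decide
          rcases hq : S.parent p with _ | q
          · rw [hGdef]
            rw [graft_parent_inr_none_none hxb
              (by rw [hS'def]; exact resFHs_parent_none hq)]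
            simp only [Option.map_none, hev, hF, Sum.elim_inr]
            rw [if_neg (by decide), hq]
          · have hqv : q ≠ v := fun h => hleaf p (h ▸ hq)
            have hqp : (⟨q, hqv⟩ : V') ≠ pV := by
              intro h
              have hqp' : q = p := congrArg Subtype.val h
              rw [hqp'] at hq
              exact parent_ne_self hS p hq
            have hres2 : S'.parent pV = some (⟨q, hqv⟩ : V') := by
              rw [hS'def]
              exact resFHs_parent_some (P := fun u => u ≠ v) hq hqv
            rw [hGdef]
            rw [graft_parent_inr_none_some hxb hres2 hqp]
            simp only [Option.map_some, hev, hF, Sum.elim_inl, Sum.elim_inr]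
            rw [if_neg (by decide), hq]
    · intro x y
      rw [hGsib, hnosib]
  -- Phi comparison
  have hphi0 : PhiFH S = PhiFH (G F₀) := by rw [← hmap, phi_map]
  have hstep : ∀ (g : Sub) x y, (G F₀).parent x = some y → AncFH (G g) x y := by
    rintro g (a | b) y hy
    · rcases hpa : S'.parent a.1 with _ | q'
      · rw [hGdef] at hy; rw [graft_parent_inl_none hpa] at hy; cases hy
      · by_cases hq' : q' = pV
        · subst hq'
          rw [hGdef] at hy; rw [graft_parent_inl_eq hpa] at hy
          cases hy
          have hpg : (G g).parent (Sum.inl a) = some (Sum.inr (g.1 ⟨a.1, hpa⟩)) := by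
            rw [hGdef]; exact graft_parent_inl_eq hpa
          by_cases hgv : g.1 ⟨a.1, hpa⟩ = 0
          · rw [hgv] at hpg
            exact Relation.TransGen.single hpg
          · have hgv1 : g.1 ⟨a.1, hpa⟩ = 1 := by
              have h1 : (g.1 ⟨a.1, hpa⟩ : ℕ) < 2 := (g.1 ⟨a.1, hpa⟩).isLt
              have h2 : (g.1 ⟨a.1, hpa⟩ : ℕ) ≠ 0 := fun h => hgv (Fin.ext h)
              apply Fin.ext
              simp only [Fin.val_one]
              omega
            rw [hgv1] at hpg
            refine Relation.TransGen.head hpg (Relation.TransGen.single ?_)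
            rw [hGdef]
            exact graft_parent_inr_some (show xFH.parent 1 = Option.some 0 by decide)
        · rw [hGdef] at hy; rw [graft_parent_inl_ne hpa hq'] at hy
          cases hy
          apply Relation.TransGen.single
          rw [hGdef]
          exact graft_parent_inl_ne hpa hq'
    · apply Relation.TransGen.single
      rw [hGinr g b]
      exact hy
  have hancmono : ∀ (g : Sub) x y, AncFH (G F₀) x y → AncFH (G g) x y := by
    intro g x y h
    induction h with
    | single h => exact hstep g _ _ h
    | tail _ h ih => exact ih.trans (hstep g _ _ h)
  have hno1 : ∀ x, (G F₀).parent x ≠ some (Sum.inr 1) := by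
    rintro (a | b) hy
    · rcases hpa : S'.parent a.1 with _ | q'
      · rw [hGdef] at hy; rw [graft_parent_inl_none hpa] at hy; cases hy
      · by_cases hq' : q' = pV
        · subst hq'
          rw [hGdef] at hy; rw [graft_parent_inl_eq hpa] at hy
          have : (0 : Fin 2) = 1 := by
            have := Option.some_inj.mp hy
            exact Sum.inr_injective this
          cases this
        · rw [hGdef] at hy; rw [graft_parent_inl_ne hpa hq'] at hy
          cases hy
    · rcases hb : xFH.parent b with _ | q0
      · rcases hp' : S'.parent pV with _ | p'
        · rw [hGdef] at hy; rw [graft_parent_inr_none_none hb hp'] at hy; cases hy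
        · have hp'ne : p' ≠ pV := by
            intro h
            exact parent_ne_self hS'forest pV (h ▸ hp')
          rw [hGdef] at hy; rw [graft_parent_inr_none_some hb hp' hp'ne] at hy
          cases hy
      · have hq00 : q0 = 0 := by
          by_cases hb0 : b = 0
          · rw [hb0] at hb; simp [xFH] at hb
          · have hx0 : xFH.parent b = Option.some 0 := by simp [xFH, hb0]
            rw [hx0] at hb
            exact (Option.some_inj.mp hb).symm
        subst hq00
        rw [hGdef] at hy; rw [graft_parent_inr_some hb] at hy
        have : (0 : Fin 2) = 1 := by
          have := Option.some_inj.mp hy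
          exact Sum.inr_injective this
        cases this
  have hnoanc1 : ∀ x, ¬ AncFH (G F₀) x (Sum.inr 1) := by
    intro x h
    cases h with
    | single h => exact hno1 _ h
    | tail _ h => exact hno1 _ h
  have hphilt : ∀ g : Sub, g ≠ F₀ → PhiFH (G F₀) < PhiFH (G g) := by
    intro g hgne
    have hex : ∃ a : {a : V' // S'.parent a = some pV}, g.1 a = 1 := by
      by_contra hcon
      push_neg at hcon
      apply hgne
      apply Subtype.ext
      funext a
      have h1 : (g.1 a : ℕ) < 2 := (g.1 a).isLt
      have h2 : (g.1 a : ℕ) ≠ 1 := fun h => hcon a (Fin.ext h)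
      have : g.1 a = 0 := by
        apply Fin.ext
        simp only [Fin.val_zero]
        omega
      rw [this]
    obtain ⟨a₀, ha₀⟩ := hex
    have hane : a₀.1 ≠ pV := by
      intro h
      have h2 := a₀.2
      rw [h] at h2
      exact parent_ne_self hS'forest pV h2
    set x₀ : {a : V' // a ≠ pV} ⊕ Fin 2 := Sum.inl ⟨a₀.1, hane⟩ with hx₀
    have hstepx : (G g).parent x₀ = some (Sum.inr 1) := by
      rw [hGdef, hx₀]
      rw [graft_parent_inl_eq a₀.2]
      exact congrArg (fun z => some (Sum.inr z)) ha₀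
    unfold PhiFH
    apply Finset.sum_lt_sum
    · intro x _
      exact Set.ncard_le_ncard (fun y hy => hancmono g x y hy) (Set.toFinite _)
    · refine ⟨x₀, Finset.mem_univ _, ?_⟩
      apply Set.ncard_lt_ncard ?_ (Set.toFinite _)
      rw [Set.ssubset_def]
      constructor
      · exact fun y hy => hancmono g x₀ y hy
      · intro hcon
        exact hnoanc1 x₀ (hcon (Relation.TransGen.single hstepx))
  -- assembling
  have hcomp := GenFH.comp pV hgen GenFH.x2
  rw [insLin_ss] at hcomp
  have hsplit : insFHs S' pV xFH =
      Finsupp.single (G F₀) 1 + ∑ g ∈ Finset.univ.erase F₀, Finsupp.single (G g) 1 := by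
    simp only [hGdef]
    unfold insFHs
    exact (Finset.add_sum_erase _ _ (Finset.mem_univ F₀)).symm
  have h0 : GenFH ({a : V' // a ≠ pV} ⊕ Fin 2) 0 := genFH_zero_of hcomp
  have herr : ∀ g ∈ Finset.univ.erase F₀,
      GenFH ({a : V' // a ≠ pV} ⊕ Fin 2) (Finsupp.single (G g) 1) := by
    intro g hg
    apply hrec (G g) (hGforest g)
    rw [hphi0]
    exact hphilt g (Finset.ne_of_mem_erase hg)
  have hsum := genFH_sum _ _ h0 herr
  have hG0 : GenFH ({a : V' // a ≠ pV} ⊕ Fin 2) (Finsupp.single (G F₀) 1) := by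
    have heq : Finsupp.single (G F₀) 1 = insFHs S' pV xFH -
        ∑ g ∈ Finset.univ.erase F₀, Finsupp.single (G g) 1 := by
      rw [hsplit]; abel
    rw [heq]
    exact genFH_sub hcomp hsum
  rw [← hmap, ← Finsupp.mapDomain_single]
  exact GenFH.relabel e hG0

end CaseB
section CaseSibPrelim

variable {V : Type}

theorem transGen_cases_head' {α : Type*} {r : α → α → Prop} {a b : α}
    (h : Relation.TransGen r a b) : r a b ∨ ∃ c, r a c ∧ Relation.TransGen r c b := by
  induction h with
  | single h => exact Or.inl h
  | tail _ hbc ih =>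
    rcases ih with h | ⟨c, hc, htc⟩
    · exact Or.inr ⟨_, h, Relation.TransGen.single hbc⟩
    · exact Or.inr ⟨c, hc, htc.tail hbc⟩

theorem resFHs_parent_elim {S : FHs V} {P : V → Prop} [DecidablePred P] {u q : {u // P u}}
    (h : (resFHs S P).parent u = some q) : S.parent u.1 = some q.1 := by
  simp only [resFHs, Option.bind_eq_some_iff] at h
  obtain ⟨q', hq', hd⟩ := h
  split at hd
  · cases hd; exact hq'
  · cases hd

end CaseSibPrelim

section CaseSib

theorem caseSib {V : Type} [Fintype V] [DecidableEq V] (S : FHs V) (hS : IsForestFH S)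
    (a₀ b₀ : V) (hsib : S.sib a₀ b₀ = true)
    (hrec : ∀ (A : Type) [Fintype A] [DecidableEq A] [Nonempty A] (G : FHs A),
      IsForestFH G → Fintype.card A < Fintype.card V → GenFH A (Finsupp.single G 1)) :
    GenFH V (Finsupp.single S 1) := by
  classical
  obtain ⟨hht, hsymm, hirr, hpar, htr⟩ := hS
  have hS' : IsForestFH S := ⟨hht, hsymm, hirr, hpar, htr⟩
  obtain ⟨p₀, hp₀⟩ : ∃ p₀, S.parent a₀ = some p₀ := by
    have := (hpar a₀ b₀ hsib).2
    rcases h : S.parent a₀ with _ | q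
    · exact absurd h this
    · exact ⟨q, rfl⟩
  set C : V → Prop := fun u => u = a₀ ∨ S.sib u a₀ = true with hC
  set D : V → Prop := fun u => ∃ c, C c ∧ (u = c ∨ AncFH S u c) with hD
  have hCD : ∀ u, C u → D u := fun u h => ⟨u, h, Or.inl rfl⟩
  have hCpar : ∀ u, C u → S.parent u = some p₀ := by
    intro u hu
    rcases hu with rfl | hu
    · exact hp₀
    · rw [(hpar u a₀ hu).1, hp₀]
  have hDa₀ : D a₀ := hCD a₀ (Or.inl rfl)
  have hCb₀ : C b₀ := Or.inr (hsymm _ _ hsib)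
  have hndp₀ : ¬ D p₀ := by
    rintro ⟨c, hc, hcase⟩
    have hanc : AncFH S c p₀ := Relation.TransGen.single (hCpar c hc)
    rcases hcase with heq | hanc2
    · rw [heq] at hanc
      exact anc_irrefl hS' c hanc
    · exact anc_irrefl hS' c (hanc.trans hanc2)
  have hDdown : ∀ u q, S.parent u = some q → D q → D u := by
    rintro u q hq ⟨c, hc, hcase⟩
    rcases hcase with heq | hanc
    · exact ⟨c, hc, Or.inr (heq ▸ Relation.TransGen.single hq)⟩
    · exact ⟨c, hc, Or.inr (Relation.TransGen.head hq hanc)⟩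
  have hDparent : ∀ u, D u → ¬ C u → ∃ q, S.parent u = some q ∧ D q := by
    rintro u ⟨c, hc, hcase⟩ hnc
    rcases hcase with rfl | hanc
    · exact absurd hc hnc
    · rcases transGen_cases_head' hanc with h | ⟨d, hd, hanc2⟩
      · exact ⟨c, h, hCD c hc⟩
      · exact ⟨d, hd, ⟨c, hc, Or.inr hanc2⟩⟩
  have hDalt : ∀ u, D u → (C u ∧ S.parent u = some p₀) ∨ (∃ q, S.parent u = some q ∧ D q) := by
    intro u hu
    by_cases hc : C u
    · exact Or.inl ⟨hc, hCpar u hc⟩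
    · exact Or.inr (hDparent u hu hc)
  have hDpar_ne : ∀ u, D u → S.parent u ≠ none := by
    intro u hu
    rcases hDalt u hu with ⟨_, h⟩ | ⟨q, h, _⟩ <;> rw [h] <;> simp
  have hCclass : ∀ u u', C u → C u' → u ≠ u' → S.sib u u' = true := by
    intro u u' hu hu' hne
    rcases hu with rfl | hu
    · rcases hu' with rfl | hu'
      · exact absurd rfl hne
      · exact hsymm _ _ hu'
    · rcases hu' with rfl | hu'
      · exact hu
      · rcases htr u a₀ u' hu (hsymm _ _ hu') with h | h
        · exact absurd h hne
        · exact h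
  have hsibCD : ∀ u u', S.sib u u' = true → D u' → D u := by
    intro u u' hss hu'
    by_cases hc : C u'
    · apply hCD
      rcases hc with rfl | hc
      · exact Or.inr hss
      · rcases htr u u' a₀ hss hc with h | h
        · exact Or.inl h
        · exact Or.inr h
    · obtain ⟨q, hq, hDq⟩ := hDparent u' hu' hc
      have hq2 : S.parent u = some q := by rw [(hpar u u' hss).1, hq]
      exact hDdown u q hq2 hDq
  set P'' : V → Prop := fun u => u = a₀ ∨ ¬ D u with hP''
  set S'' : FHs {u // P'' u} := resFHs S P'' with hS''
  set T : FHs {u // D u} := resFHs S D with hT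
  set w : {u // P'' u} := ⟨a₀, Or.inl rfl⟩ with hw
  have hp₀P : P'' p₀ := Or.inr hndp₀
  have hp₀ne : p₀ ≠ a₀ := by
    intro h
    rw [h] at hndp₀
    exact hndp₀ hDa₀
  have hchild : ∀ a : {u // P'' u}, S''.parent a ≠ some w := by
    intro a h
    rw [hS''] at h
    have h2 : S.parent a.1 = some a₀ := resFHs_parent_elim h
    rcases a.2 with ha | ha
    · exact parent_ne_self hS' a₀ (ha ▸ h2)
    · exact ha (hDdown a.1 a₀ h2 hDa₀)
  -- instances and cardinalities
  have hNe1 : Nonempty {u // P'' u} := ⟨w⟩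
  have hNe2 : Nonempty {u // D u} := ⟨⟨a₀, hDa₀⟩⟩
  have hb₀ne : b₀ ≠ a₀ := by
    intro h
    rw [h] at hsib
    exact hirr a₀ hsib
  have hcard1 : Fintype.card {u // P'' u} < Fintype.card V := by
    apply Fintype.card_subtype_lt (x := b₀)
    rintro (h1 | h2)
    · exact hb₀ne h1
    · exact h2 (hCD b₀ hCb₀)
  have hcard2 : Fintype.card {u // D u} < Fintype.card V :=
    Fintype.card_subtype_lt (x := p₀) hndp₀
  have hgen'' := hrec _ S'' (hS'' ▸ resFHs_forest hS' P'') hcard1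
  have hgenT := hrec _ T (hT ▸ resFHs_forest hS' D) hcard2
  set junkf : {a : {u // P'' u} // S''.parent a = some w} → {u // D u} :=
    fun a => absurd a.2 (hchild a.1) with hjunk
  have hcomp := GenFH.comp w hgen'' hgenT
  rw [insLin_ss, insFHs_eq_single S'' w T hchild junkf] at hcomp
  set GG := graftFHs S'' w T junkf with hGG
  -- relabeling
  have hnotDinl : ∀ a : {a : {u // P'' u} // a ≠ w}, ¬ D a.1.1 := by
    intro a hDa
    rcases a.1.2 with ha | ha
    · exact a.2 (Subtype.ext ha)
    · exact ha hDa
  set F : ({a : {u // P'' u} // a ≠ w} ⊕ {u // D u}) → V :=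
    Sum.elim (fun a => a.1.1) (fun d => d.1) with hF
  have hbij : Function.Bijective F := by
    constructor
    · rintro (a | d) (a' | d') h
      · exact congrArg _ (Subtype.ext (Subtype.ext h))
      · exact absurd ((show (a.1.1 : V) = d'.1 from h) ▸ d'.2) (hnotDinl a)
      · exact absurd ((show (d.1 : V) = a'.1.1 from h).symm ▸ d.2) (hnotDinl a')
      · exact congrArg _ (Subtype.ext h)
    · intro u
      by_cases hDu : D u
      · exact ⟨Sum.inr ⟨u, hDu⟩, rfl⟩
      · refine ⟨Sum.inl ⟨⟨u, Or.inr hDu⟩, ?_⟩, rfl⟩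
        intro h
        have : u = a₀ := congrArg Subtype.val h
        rw [this] at hDu
        exact hDu hDa₀
  set e := Equiv.ofBijective F hbij with he
  have hev : ∀ x, e x = F x := fun x => rfl
  have hwpar : S''.parent w = some ⟨p₀, hp₀P⟩ := by
    rw [hS'']
    exact resFHs_parent_some (P := P'') hp₀ hp₀P
  have hwne : (⟨p₀, hp₀P⟩ : {u // P'' u}) ≠ w := by
    intro h
    exact hp₀ne (congrArg Subtype.val h)
  have hCTroot : ∀ d : {u // D u}, T.parent d = none → C d.1 := by
    intro d hTd
    rcases hDalt d.1 d.2 with ⟨hc, _⟩ | ⟨q, hq, hDq⟩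
    · exact hc
    · rw [hT, resFHs_parent_some (P := D) hq hDq] at hTd
      cases hTd
  have hmap : mapFHs e GG = S := by
    apply mapFHs_eq_of
    · rintro (a | d)
      · have hu : ¬ D a.1.1 := hnotDinl a
        rcases hq : S.parent a.1.1 with _ | q
        · rw [hGG, graft_parent_inl_none (by rw [hS'']; exact resFHs_parent_none hq)]
          simp [hev, hF, hq]
        · have hDq : ¬ D q := fun h => hu (hDdown a.1.1 q hq h)
          have hres : S''.parent a.1 = some ⟨q, Or.inr hDq⟩ := by
            rw [hS'']
            exact resFHs_parent_some (P := P'') hq (Or.inr hDq)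
          have hne : (⟨q, Or.inr hDq⟩ : {u // P'' u}) ≠ w := by
            intro h
            have : q = a₀ := congrArg Subtype.val h
            rw [this] at hDq
            exact hDq hDa₀
          rw [hGG, graft_parent_inl_ne hres hne]
          simp [hev, hF, hq]
      · have hu : D d.1 := d.2
        rcases hq : S.parent d.1 with _ | q
        · exact absurd hq (hDpar_ne d.1 hu)
        · by_cases hDq : D q
          · rw [hGG, graft_parent_inr_some
              (by rw [hT]; exact resFHs_parent_some (P := D) hq hDq)]
            simp [hev, hF, hq]
          · have hCu : C d.1 := by
              rcases hDalt d.1 hu with ⟨hc, _⟩ | ⟨q', hq', hDq'⟩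
              · exact hc
              · rw [hq'] at hq
                cases hq
                exact absurd hDq' hDq
            have hq0 : q = p₀ := by
              have h2 := hCpar d.1 hCu
              rw [hq] at h2
              exact Option.some_inj.mp h2
            subst hq0
            have hTnone : T.parent d = none := by
              rw [hT]; exact resFHs_parent_out hq hDq
            rw [hGG, graft_parent_inr_none_some hTnone hwpar hwne]
            simp [hev, hF, hq]
    · rintro (a | d) (a' | d')
      · rw [hGG, graft_sib_inl_inl]
        simp only [hev, hF, Sum.elim_inl, Sum.elim_inr]
        rcases hss : S.sib a.1.1 a'.1.1 with _ | _
        · rw [hS'']; exact resFHs_sib_of_false hss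
        · obtain ⟨hpeq, hpnn⟩ := hpar _ _ hss
          rcases hq : S.parent a.1.1 with _ | q
          · exact absurd hq hpnn
          · have hDq : ¬ D q := fun h => (hnotDinl a) (hDdown a.1.1 q hq h)
            rw [hS'']
            exact resFHs_sib_true (P := P'') hss hq (Or.inr hDq)
      · rw [hGG, graft_sib_inl_inr]
        simp only [hev, hF, Sum.elim_inl, Sum.elim_inr]
        rcases hss : S.sib a.1.1 d'.1 with _ | _
        · rfl
        · exact absurd (hsibCD _ _ hss d'.2) (hnotDinl a)
      · rw [hGG, graft_sib_inr_inl]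
        simp only [hev, hF, Sum.elim_inl, Sum.elim_inr]
        rcases hss : S.sib d.1 a'.1.1 with _ | _
        · rfl
        · exact absurd (hsibCD _ _ (hsymm _ _ hss) d.2) (hnotDinl a')
      · rw [hGG, graft_sib_inr_inr]
        simp only [hev, hF, Sum.elim_inl, Sum.elim_inr]
        have hwb : decide (S''.parent w ≠ none) = true := by
          rw [hwpar]; simp
        rcases hss : S.sib d.1 d'.1 with _ | _
        · have hT1 : T.sib d d' = false := by
            rw [hT]; exact resFHs_sib_of_false hss
          rw [hT1]
          simp only [Bool.false_or]
          by_cases h1 : T.parent d = none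
          · by_cases h2 : T.parent d' = none
            · by_cases h3 : d = d'
              · simp [h3]
              · exfalso
                have hne : d.1 ≠ d'.1 := fun h => h3 (Subtype.ext h)
                have := hCclass d.1 d'.1 (hCTroot d h1) (hCTroot d' h2) hne
                rw [this] at hss
                cases hss
            · simp [h2]
          · simp [h1]
        · obtain ⟨hpeq, hpnn⟩ := hpar _ _ hss
          rcases hq : S.parent d.1 with _ | q
          · exact absurd hq hpnn
          · have hq' : S.parent d'.1 = some q := by rw [← hpeq, hq]
            by_cases hDq : D q
            · have : T.sib d d' = true := by
                rw [hT]; exact resFHs_sib_true (P := D) hss hq hDq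
              rw [this]
              simp
            · have hT1 : T.parent d = none := by rw [hT]; exact resFHs_parent_out hq hDq
              have hT2 : T.parent d' = none := by rw [hT]; exact resFHs_parent_out hq' hDq
              have hdd : d ≠ d' := by
                intro h
                rw [h] at hss
                exact hirr _ hss
              rw [hT1, hT2]
              simp [hdd, hwb]
  rw [← hmap, ← Finsupp.mapDomain_single]
  exact GenFH.relabel e hcomp

end CaseSib
section CaseA

open Finsupp

theorem caseA {V : Type} [Fintype V] [DecidableEq V] (S : FHs V) (hS : IsForestFH S) (v : V)
    (hroot : S.parent v = none) (hleaf : ∀ u, S.parent u ≠ some v)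
    (hnosib : ∀ a b, S.sib a b = false)
    (hgen : GenFH {u : V // u ≠ v} (Finsupp.single (resFHs S (fun u => u ≠ v)) 1)) :
    GenFH V (Finsupp.single S 1) := by
  classical
  set S' : FHs {u : V // u ≠ v} := resFHs S (fun u => u ≠ v) with hS'
  have hnochild : ∀ a : Fin 2, cFH.parent a ≠ some 1 := by intro a; simp [cFH]
  set f : {a : Fin 2 // cFH.parent a = some 1} → {u : V // u ≠ v} :=
    fun a => absurd a.2 (hnochild a.1) with hf
  have h2 := GenFH.comp (1 : Fin 2) GenFH.c2 hgen
  rw [insLin_ss, insFHs_eq_single cFH 1 S' hnochild f] at h2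
  set G : FHs ({a : Fin 2 // a ≠ 1} ⊕ {u : V // u ≠ v}) := graftFHs cFH 1 S' f with hG
  -- the relabeling
  set F : ({a : Fin 2 // a ≠ 1} ⊕ {u : V // u ≠ v}) → V :=
    Sum.elim (fun _ => v) (fun u => u.1) with hF
  have hbij : Function.Bijective F := by
    constructor
    · rintro (a | u) (a' | u') h
      · have : a = a' := by
          apply Subtype.ext
          omega
        rw [this]
      · exact absurd (congrArg id h).symm u'.2
      · exact absurd (congrArg id h) u.2
      · exact congrArg _ (Subtype.ext h)
    · intro u
      by_cases h : u = v
      · exact ⟨Sum.inl ⟨0, by decide⟩, h.symm⟩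
      · exact ⟨Sum.inr ⟨u, h⟩, rfl⟩
  set e := Equiv.ofBijective F hbij with he
  have hev : ∀ x, e x = F x := fun x => rfl
  have hmap : mapFHs e G = S := by
    apply mapFHs_eq_of
    · rintro (a | u)
      · rw [graft_parent_inl_none (by simp [cFH])]
        simp [hev, hF, hroot]
      · rcases hq : S.parent u.1 with _ | q
        · rw [graft_parent_inr_none_none (resFHs_parent_none hq) (by simp [cFH])]
          simp [hev, hF, hq]
        · have hqv : q ≠ v := fun h => hleaf u.1 (h ▸ hq)
          rw [graft_parent_inr_some (resFHs_parent_some hq hqv)]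
          simp [hev, hF, hq]
    · rintro (a | u) (a' | u')
      · rw [graft_sib_inl_inl]
        simp [cFH, hev, hF, hnosib]
      · rw [graft_sib_inl_inr]
        simp [hev, hF, hnosib]
      · rw [graft_sib_inr_inl]
        simp [hev, hF, hnosib]
      · rw [graft_sib_inr_inr, resFHs_sib_of_false (hnosib _ _)]
        simp [cFH, hev, hF, hnosib]
  rw [← hmap, ← Finsupp.mapDomain_single]
  exact GenFH.relabel e h2

end CaseA
section Main

theorem mainFH : ∀ (n j : ℕ) (V : Type) [Fintype V] [DecidableEq V] [Nonempty V] (S : FHs V),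
    IsForestFH S → Fintype.card V ≤ n → n * n ≤ PhiFH S + j →
    GenFH V (Finsupp.single S 1) := by
  intro n
  induction n with
  | zero =>
    intro j V _ _ _ S _ hcard _
    have := Fintype.card_pos (α := V)
    omega
  | succ n ihn =>
    intro j
    induction j with
    | zero =>
      intro V _ _ _ S hS hcard hj
      have h1 := phi_lt hS
      have h2 : Fintype.card V * Fintype.card V ≤ (n + 1) * (n + 1) :=
        Nat.mul_le_mul hcard hcard
      omega
    | succ j ihj =>
      intro V iF iD iN S hS hcard hj
      classical
      by_cases hone : Fintype.card V = 1
      · -- singleton base case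
        have hsing : Subsingleton V := Fintype.card_le_one_iff_subsingleton.mp (le_of_eq hone)
        have hparn : ∀ u : V, S.parent u = none := by
          intro u
          rcases hq : S.parent u with _ | q
          · rfl
          · have hqu : q = u := Subsingleton.elim q u
            rw [hqu] at hq
            exact absurd hq (parent_ne_self hS u)
        set e : Fin 1 ≃ V := (Fintype.equivFinOfCardEq hone).symm with he
        have hmap : mapFHs e ⟨fun _ => none, fun _ _ => false⟩ = S := by
          apply mapFHs_eq_of
          · intro x
            simp [hparn]
          · intro x y
            show false = S.sib (e x) (e y)
            rw [Subsingleton.elim (e x) (e y)]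
            exact (Bool.eq_false_iff.mpr (hS.2.2.1 (e y))).symm
        rw [← hmap, ← Finsupp.mapDomain_single]
        exact GenFH.relabel e GenFH.unit
      · have hcard2 : 2 ≤ Fintype.card V := by
          have := Fintype.card_pos (α := V)
          omega
        by_cases hsibex : ∃ a b, S.sib a b = true
        · obtain ⟨a₀, b₀, hsib0⟩ := hsibex
          apply caseSib S hS a₀ b₀ hsib0
          intro A _ _ _ G hG hcardA
          exact ihn (n * n) A G hG (by omega) (by omega)
        · push_neg at hsibex
          have hnosib : ∀ a b, S.sib a b = false := fun a b =>
            Bool.eq_false_iff.mpr (hsibex a b)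
          obtain ⟨h, hh⟩ := hS.1
          obtain ⟨v, -, hv⟩ := Finset.exists_max_image Finset.univ h Finset.univ_nonempty
          have hleaf : ∀ u, S.parent u ≠ some v := by
            intro u hu
            have h1 := hh u v hu
            have h2 := hv u (Finset.mem_univ u)
            omega
          have hne' : Nonempty {u : V // u ≠ v} := by
            obtain ⟨u, hu⟩ := Fintype.exists_ne_of_one_lt_card (by omega) v
            exact ⟨⟨u, hu⟩⟩
          have hcard' : Fintype.card {u : V // u ≠ v} = Fintype.card V - 1 := by
            rw [Fintype.card_subtype_compl, Fintype.card_subtype_eq]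
          have hgen : GenFH {u : V // u ≠ v}
              (Finsupp.single (resFHs S (fun u => u ≠ v)) 1) :=
            ihn (n * n) _ (resFHs S (fun u => u ≠ v)) (resFHs_forest hS _)
              (by omega) (by omega)
          rcases hpv : S.parent v with _ | p
          · exact caseA S hS v hpv hleaf hnosib hgen
          · have hpne : p ≠ v := fun h' => hleaf v (h' ▸ hpv)
            apply caseB S hS v p hpv hpne hleaf hnosib hgen
            intro G hG hphi
            have hNeG : Nonempty ({a : {u : V // u ≠ v} // a ≠ (⟨p, hpne⟩ : {u : V // u ≠ v})} ⊕ Fin 2) :=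
              ⟨Sum.inr 0⟩
            have hcG : Fintype.card ({a : {u : V // u ≠ v} // a ≠ (⟨p, hpne⟩ : {u : V // u ≠ v})} ⊕ Fin 2) =
                Fintype.card V := by
              rw [Fintype.card_sum, Fintype.card_subtype_compl, Fintype.card_subtype_eq,
                Fintype.card_fin, hcard']
              omega
            exact ihj _ G hG (by omega) (by omega)

end Main

/-- The operad `FH` of forests of rooted hypertrees is generated by its arity-2 component,
i.e. by `x₂` and `c₂`: every forest of rooted hypertrees lies in the suboperad they
generate. -/
theorem fh_generated_in_arity_two :
    ∀ (V : Type) [Fintype V] [DecidableEq V] [Nonempty V] (S : FHs V),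
      IsForestFH S → GenFH V (Finsupp.single S 1) := by
  intro V _ _ _ S hS
  exact mainFH (Fintype.card V) (Fintype.card V * Fintype.card V) V S hS le_rfl
    (by omega)
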